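/- (Lemma 2) For every edge set E ⊆ (V choose 2), [Γ^A]_E = Σ over isthmus-free subsets H ⊆ E of α^{|E|−|H|} · [Γ^A_+]_H. -/

import Mathlib

open scoped Classical

noncomputable section

/-- Number of connected components of the graph on `V` with edge set `E`. -/
def cComp (V : Type) [Fintype V] (E : Finset (Sym2 V)) : ℕ :=
  Nat.card (SimpleGraph.fromEdgeSet (E : Set (Sym2 V))).ConnectedComponent

/-- `E` is isthmus-free: it contains no edge whose removal increases the number
of connected components. -/
def IsthmusFree (V : Type) [Fintype V] (E : Finset (Sym2 V)) : Prop :=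
  ∀ t ∈ E, ¬ cComp V (E.erase t) > cComp V E

/-- Möbius function of the poset `P_V` of isthmus-free edge sets on `V`,
ordered by inclusion: `μ(K,K) = 1` and `∑_{L ∈ P_V, K ⊆ L ⊆ H} μ(K,L) = 0` for `K ⊊ H`. -/
def muPV (V : Type) [Fintype V] (K H : Finset (Sym2 V)) : ℤ :=
  if K = H then 1
  else - ∑ L ∈ ((H.powerset.filter (fun L => K ⊆ L ∧ L ≠ H ∧ IsthmusFree V L)).attach),
      muPV V K L.1
termination_by H.card
decreasing_by
  have hL := L.2
  simp only [Finset.mem_filter, Finset.mem_powerset] at hL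
  exact Finset.card_lt_card (lt_of_le_of_ne hL.1 hL.2.2.1)

/-- `[Γ^A]_E`: the probability that a uniformly random coloring `X : V → F` has all
differences along edges of `E` inside `A`. -/
def Gamma (V : Type) [Fintype V] (F : Type) [Fintype F] [AddCommGroup F]
    (A : Finset F) (E : Finset (Sym2 V)) : ℝ :=
  (Nat.card {X : V → F //
      ∀ e ∈ E, ∀ u w : V, e = s(u, w) → X u - X w ∈ A} : ℝ) /
    (Fintype.card F : ℝ) ^ (Fintype.card V)

end

/-- `[Γ^A_+]_E = f^{-|E|} Σ_P Σ_{Q ∈ A^E} ⟨P,Q⟩_E`, the sum running over flows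
`P ∈ F̂^E` (i.e. `⟨P, δ_E X⟩_E = 1` for all `X : V → F`, for the orientation `o`)
that are nowhere trivial. -/
noncomputable def GammaPlus (V : Type) [Fintype V] (F : Type) [Fintype F] [AddCommGroup F]
    (o : Sym2 V → V × V) (A : Finset F) (E : Finset (Sym2 V)) : ℂ :=
  (∑ P ∈ Finset.univ.filter (fun P : E → AddChar F ℂ =>
      (∀ X : V → F, ∏ t : E, P t (X (o t.1).1 - X (o t.1).2) = 1) ∧
      ∀ t : E, ∃ a : F, P t a ≠ 1),
    ∑ Q ∈ Finset.univ.filter (fun Q : E → F => ∀ t : E, Q t ∈ A),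
      ∏ t : E, P t (Q t)) / (Fintype.card F : ℂ) ^ E.card


section AuxLemmas
set_option linter.unusedSectionVars false
open Finset

variable {V : Type} [Fintype V] {F : Type} [Fintype F] [AddCommGroup F]

lemma cComp_erase_eq (H : Finset (Sym2 V)) (t : Sym2 V) (u w : V)
    (htu : t = s(u, w))
    (hr : (SimpleGraph.fromEdgeSet ((H.erase t : Finset (Sym2 V)) : Set (Sym2 V))).Reachable u w) :
    cComp V (H.erase t) = cComp V H := by
  set G' := SimpleGraph.fromEdgeSet ((H.erase t : Finset (Sym2 V)) : Set (Sym2 V)) with hG'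
  set G := SimpleGraph.fromEdgeSet ((H : Finset (Sym2 V)) : Set (Sym2 V)) with hG
  have hle : G' ≤ G := SimpleGraph.fromEdgeSet_mono (by
    intro e he
    simp only [Finset.coe_erase, Set.mem_diff] at he
    exact he.1)
  have key : ∀ a b : V, G'.Reachable a b ↔ G.Reachable a b := by
    intro a b
    constructor
    · exact fun h => h.mono hle
    · rintro ⟨wk⟩
      induction wk with
      | nil => exact SimpleGraph.Reachable.refl _
      | cons h p ih =>
        rename_i x y z
        refine SimpleGraph.Reachable.trans ?_ ih
        rw [SimpleGraph.fromEdgeSet_adj] at h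
        by_cases hxy : s(x, y) = t
        · rw [htu] at hxy
          rcases Sym2.eq_iff.mp hxy with ⟨rfl, rfl⟩ | ⟨rfl, rfl⟩
          · exact hr
          · exact hr.symm
        · exact SimpleGraph.Adj.reachable (by
            rw [SimpleGraph.fromEdgeSet_adj]
            exact ⟨by simpa [Finset.mem_erase, hxy] using h.1, h.2⟩)
  exact Nat.card_congr (Quot.congrRight key)

lemma flow_trivial_of_isthmus (o : Sym2 V → V × V) (ho : ∀ e : Sym2 V, Sym2.mk.uncurry (o e) = e)
    (H : Finset (Sym2 V)) (hnd : ∀ e ∈ H, ¬ e.IsDiag) (t : Sym2 V) (ht : t ∈ H)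
    (hc : cComp V (H.erase t) > cComp V H)
    (P : H → AddChar F ℂ)
    (hP : ∀ X : V → F, ∏ s : H, P s (X (o s.1).1 - X (o s.1).2) = 1) :
    P ⟨t, ht⟩ = 1 := by
  set u := (o t).1 with hu
  set w := (o t).2 with hw
  have htu : t = s(u, w) := by rw [hu, hw]; exact (ho t).symm
  set G' := SimpleGraph.fromEdgeSet ((H.erase t : Finset (Sym2 V)) : Set (Sym2 V)) with hG'
  have hnr : ¬ G'.Reachable u w := by
    intro hr
    have := cComp_erase_eq H t u w htu hr
    omega
  apply AddChar.ext
  intro c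
  have hside : ∀ s : H, s ≠ ⟨t, ht⟩ →
      P s ((fun x => if G'.Reachable u x then c else 0) (o s.1).1
        - (fun x => if G'.Reachable u x then c else 0) (o s.1).2) = 1 := by
    rintro ⟨e, he⟩ hne
    have het : e ≠ t := by
      intro h; exact hne (by simp [h])
    have heH : e ∈ H.erase t := Finset.mem_erase.mpr ⟨het, he⟩
    have hoe : s((o e).1, (o e).2) = e := ho e
    have hadj : G'.Adj (o e).1 (o e).2 := by
      rw [SimpleGraph.fromEdgeSet_adj]
      constructor
      · rw [hoe]; exact heH
      · intro hdiag
        exact hnd e he (by rw [← ho e]; exact Sym2.mk_isDiag_iff.mpr hdiag)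
    have hiff : G'.Reachable u (o e).1 ↔ G'.Reachable u (o e).2 :=
      ⟨fun h => h.trans hadj.reachable, fun h => h.trans hadj.symm.reachable⟩
    simp only
    by_cases hcase : G'.Reachable u (o e).1
    · rw [if_pos hcase, if_pos (hiff.mp hcase), sub_self]
      exact AddChar.map_zero_eq_one _
    · rw [if_neg hcase, if_neg (fun h => hcase (hiff.mpr h)), sub_self]
      exact AddChar.map_zero_eq_one _
  have hX := hP (fun x => if G'.Reachable u x then c else 0)
  rw [Fintype.prod_eq_single ⟨t, ht⟩ hside] at hX
  simp only at hX
  rw [if_pos (SimpleGraph.Reachable.refl u), if_neg hnr, sub_zero] at hX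
  simpa using hX

lemma indicator_eq' (A : Finset F) (hA : ∀ a ∈ A, -a ∈ A) (x : F) :
    (∑ ψ : AddChar F ℂ, (∑ a ∈ A, ψ a) * ψ x)
      = (if x ∈ A then (1:ℂ) else 0) * (Fintype.card F : ℂ) := by
  have h1 : ∑ ψ : AddChar F ℂ, (∑ a ∈ A, ψ a) * ψ x
      = ∑ a ∈ A, ∑ ψ : AddChar F ℂ, ψ (a + x) := by
    rw [Finset.sum_comm]
    refine Finset.sum_congr rfl fun ψ _ => ?_
    rw [Finset.sum_mul]
    refine Finset.sum_congr rfl fun a _ => (AddChar.map_add_eq_mul ψ a x).symm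
  rw [h1]
  have h2 : ∀ a ∈ A, ∑ ψ : AddChar F ℂ, ψ (a + x)
      = if a = -x then (Fintype.card F : ℂ) else 0 := by
    intro a _
    rw [AddChar.sum_apply_eq_ite]
    congr 1
    simp [add_eq_zero_iff_eq_neg]
  rw [Finset.sum_congr rfl h2, Finset.sum_ite_eq' A (-x) (fun _ => (Fintype.card F : ℂ))]
  have hmem : -x ∈ A ↔ x ∈ A := ⟨fun h => by simpa using hA _ h, fun h => hA _ h⟩
  by_cases hx : x ∈ A <;> simp [hx, hmem]

lemma qsum (A : Finset F) {ι : Type} [Fintype ι] (g : ι → F → ℂ) :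
    ∑ Q ∈ Finset.univ.filter (fun Q : ι → F => ∀ t, Q t ∈ A), ∏ t, g t (Q t)
      = ∏ t, ∑ a ∈ A, g t a := by
  rw [Finset.prod_univ_sum]
  refine Finset.sum_congr ?_ fun _ _ => rfl
  ext Q
  simp [Fintype.mem_piFinset]

lemma sum_flow (E : Finset (Sym2 V)) (o : Sym2 V → V × V) (P : E → AddChar F ℂ) :
    ∑ X : V → F, ∏ t : E, P t (X (o t.1).1 - X (o t.1).2)
      = if (∀ X : V → F, ∏ t : E, P t (X (o t.1).1 - X (o t.1).2) = 1)
        then ((Fintype.card F : ℂ)) ^ (Fintype.card V) else 0 := by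
  set Ψ : AddChar (V → F) ℂ :=
    { toFun := fun X => ∏ t : E, P t (X (o t.1).1 - X (o t.1).2)
      map_zero_eq_one' := by simp
      map_add_eq_mul' := by
        intro X Y
        rw [← Finset.prod_mul_distrib]
        refine Finset.prod_congr rfl fun t _ => ?_
        rw [← AddChar.map_add_eq_mul]
        congr 1
        simp only [Pi.add_apply]
        abel } with hΨ
  have : ∑ X : V → F, ∏ t : E, P t (X (o t.1).1 - X (o t.1).2) = ∑ X, Ψ X := rfl
  rw [this, AddChar.sum_eq_ite Ψ]
  have hcard : (Fintype.card (V → F) : ℂ) = (Fintype.card F : ℂ) ^ (Fintype.card V) := by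
    rw [Fintype.card_fun]; push_cast; ring
  have hΨ0 : (Ψ = 0) ↔ (∀ X : V → F, ∏ t : E, P t (X (o t.1).1 - X (o t.1).2) = 1) := by
    rw [DFunLike.ext_iff]
    simp [hΨ]
  rw [hcard]
  by_cases h : Ψ = 0
  · rw [if_pos h, if_pos (hΨ0.mp h)]
  · rw [if_neg h, if_neg (fun hh => h (hΨ0.mpr hh))]

lemma card_filter_mem {E H : Finset (Sym2 V)} (hHE : H ⊆ E) :
    (Finset.univ.filter (fun t : E => t.1 ∈ H)).card = H.card := by
  have h : (Finset.univ.filter (fun t : E => t.1 ∈ H)).card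
      = (Finset.univ : Finset H).card := by
    refine Finset.card_bij' (fun a ha => (⟨a.1, (Finset.mem_filter.mp ha).2⟩ : H))
      (fun b _ => (⟨b.1, hHE b.2⟩ : E)) ?_ ?_ ?_ ?_
    · intro a ha; exact Finset.mem_univ _
    · intro b hb; simp [b.2]
    · intro a ha; rfl
    · intro b hb; rfl
  rw [h, Finset.card_univ, Fintype.card_coe]

lemma prod_split {E H : Finset (Sym2 V)} (hHE : H ⊆ E) (h : E → ℂ) (c : ℂ)
    (h1 : ∀ t : E, t.1 ∉ H → h t = c) :
    ∏ t : E, h t = c ^ (E.card - H.card) * ∏ t : H, h ⟨t.1, hHE t.2⟩ := by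
  rw [← Finset.prod_filter_mul_prod_filter_not Finset.univ (fun t : E => t.1 ∈ H) h]
  rw [mul_comm]
  congr 1
  · rw [Finset.prod_congr rfl (fun t ht => h1 t (Finset.mem_filter.mp ht).2),
      Finset.prod_const]
    congr 1
    have := Finset.card_filter_add_card_filter_not (s := (Finset.univ : Finset E))
      (p := fun t : E => t.1 ∈ H)
    rw [card_filter_mem hHE] at this
    simp only [Finset.card_univ, Fintype.card_coe] at this
    omega
  · refine Finset.prod_bij' (fun a ha => (⟨a.1, (Finset.mem_filter.mp ha).2⟩ : H))
      (fun b _ => (⟨b.1, hHE b.2⟩ : E)) ?_ ?_ ?_ ?_ ?_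
    · intro a ha; exact Finset.mem_univ _
    · intro b hb; simp [b.2]
    · intro a ha; rfl
    · intro b hb; rfl
    · intro a ha; rfl

def IsFlowAux (o : Sym2 V → V × V) (E : Finset (Sym2 V)) (P : E → AddChar F ℂ) : Prop :=
  ∀ X : V → F, ∏ t : E, P t (X (o t.1).1 - X (o t.1).2) = 1

noncomputable def gtermAux (A : Finset F) (E : Finset (Sym2 V)) (P : E → AddChar F ℂ) : ℂ :=
  ∏ t : E, ∑ a ∈ A, P t a

noncomputable def suppAux (E : Finset (Sym2 V)) (P : E → AddChar F ℂ) : Finset (Sym2 V) :=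
  (Finset.univ.filter (fun t : E => P t ≠ 1)).image Subtype.val


lemma mem_suppAux_iff {E : Finset (Sym2 V)} (P : E → AddChar F ℂ) (t : E) :
    t.1 ∈ suppAux E P ↔ P t ≠ 1 := by
  simp only [suppAux, Finset.mem_image, Finset.mem_filter, Finset.mem_univ, true_and]
  constructor
  · rintro ⟨s, hs, hst⟩
    rwa [show s = t from Subtype.ext hst] at hs
  · exact fun h => ⟨t, h, rfl⟩

lemma suppAux_subset {E : Finset (Sym2 V)} (P : E → AddChar F ℂ) : suppAux E P ⊆ E := by
  intro e he
  simp only [suppAux, Finset.mem_image] at he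
  obtain ⟨s, _, rfl⟩ := he
  exact s.2

lemma fiber_eq (o : Sym2 V → V × V) (A : Finset F) {E H : Finset (Sym2 V)} (hHE : H ⊆ E) :
    ∑ P ∈ (Finset.univ.filter (fun P : E → AddChar F ℂ => IsFlowAux o E P)).filter
        (fun P => suppAux E P = H), gtermAux A E P
      = (A.card : ℂ) ^ (E.card - H.card) *
        ∑ P' ∈ Finset.univ.filter
          (fun P' : H → AddChar F ℂ => IsFlowAux o H P' ∧ ∀ t : H, P' t ≠ 1),
          gtermAux A H P' := by
  rw [Finset.mul_sum]
  refine Finset.sum_nbij' (fun P => fun t : H => P ⟨t.1, hHE t.2⟩)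
    (fun P' => fun t : E => if h : t.1 ∈ H then P' ⟨t.1, h⟩ else 1) ?_ ?_ ?_ ?_ ?_
  · -- maps to
    intro P hP
    simp only [Finset.mem_filter, Finset.mem_univ, true_and] at hP ⊢
    obtain ⟨hflow, hsuppP⟩ := hP
    have hsupp : ∀ t : E, t.1 ∉ H → P t = 1 := by
      intro t ht
      by_contra hne
      exact ht (hsuppP ▸ (mem_suppAux_iff P t).mpr hne)
    constructor
    · intro X
      have := prod_split hHE (fun t => P t (X (o t.1).1 - X (o t.1).2)) 1
        (fun t ht => by beta_reduce; rw [hsupp t ht]; simp)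
      rw [one_pow, one_mul] at this
      rw [← this]
      exact hflow X
    · intro t
      exact (mem_suppAux_iff P ⟨t.1, hHE t.2⟩).mp (by rw [hsuppP]; exact t.2)
  · -- maps back
    intro P' hP'
    simp only [Finset.mem_filter, Finset.mem_univ, true_and] at hP' ⊢
    obtain ⟨hflow, hnt⟩ := hP'
    have happ : ∀ t : H,
        (fun t : E => if h : t.1 ∈ H then P' ⟨t.1, h⟩ else 1) ⟨t.1, hHE t.2⟩ = P' t := by
      intro t; exact dif_pos t.2
    constructor
    · intro X
      rw [prod_split hHE
        (fun t => (if h : t.1 ∈ H then P' ⟨t.1, h⟩ else 1) (X (o t.1).1 - X (o t.1).2)) 1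
        (fun t ht => by beta_reduce; rw [dif_neg ht]; simp)]
      rw [one_pow, one_mul]
      rw [← hflow X]
      exact Finset.prod_congr rfl fun t _ => by rw [dif_pos t.2]
    · -- supp = H
      apply Finset.Subset.antisymm
      · intro e he
        have heE := suppAux_subset _ he
        have := (mem_suppAux_iff _ ⟨e, heE⟩).mp he
        by_contra heH
        rw [dif_neg heH] at this
        exact this rfl
      · intro e he
        refine (mem_suppAux_iff _ ⟨e, hHE he⟩).mpr ?_
        rw [dif_pos he]
        exact hnt ⟨e, he⟩
  · -- left inverse
    intro P hP
    simp only [Finset.mem_filter, Finset.mem_univ, true_and] at hP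
    funext t
    beta_reduce
    by_cases h : t.1 ∈ H
    · rw [dif_pos h]
    · rw [dif_neg h]
      by_contra hne
      exact h (hP.2 ▸ (mem_suppAux_iff P t).mpr (fun heq => hne heq.symm))
  · -- right inverse
    intro P' hP'
    funext t
    exact dif_pos t.2
  · -- values
    intro P hP
    simp only [Finset.mem_filter, Finset.mem_univ, true_and] at hP
    have hsupp : ∀ t : E, t.1 ∉ H → P t = 1 := by
      intro t ht
      by_contra hne
      exact ht (hP.2 ▸ (mem_suppAux_iff P t).mpr hne)
    have := prod_split hHE (fun t => ∑ a ∈ A, P t a) (A.card : ℂ)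
      (fun t ht => by beta_reduce; rw [hsupp t ht]; simp)
    exact this

lemma cond_iff (A : Finset F) (hA : ∀ a ∈ A, -a ∈ A) (E : Finset (Sym2 V))
    (o : Sym2 V → V × V) (ho : ∀ e : Sym2 V, Sym2.mk.uncurry (o e) = e) (X : V → F) :
    (∀ e ∈ E, ∀ u w : V, e = s(u, w) → X u - X w ∈ A)
      ↔ ∀ t : E, X (o t.1).1 - X (o t.1).2 ∈ A := by
  constructor
  · intro h t
    exact h t.1 t.2 (o t.1).1 (o t.1).2 (ho t.1).symm
  · intro h e he u w hew
    have h1 : X (o e).1 - X (o e).2 ∈ A := h ⟨e, he⟩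
    have h2 : s(u, w) = s((o e).1, (o e).2) := by rw [← hew]; exact (ho e).symm
    rcases Sym2.eq_iff.mp h2 with ⟨hu, hw⟩ | ⟨hu, hw⟩
    · rw [hu, hw]; exact h1
    · rw [hu, hw, show X (o e).2 - X (o e).1 = -(X (o e).1 - X (o e).2) by abel]
      exact hA _ h1

lemma gamma_eq (A : Finset F) (hA : ∀ a ∈ A, -a ∈ A) (E : Finset (Sym2 V))
    (o : Sym2 V → V × V) (ho : ∀ e : Sym2 V, Sym2.mk.uncurry (o e) = e) :
    (Gamma V F A E : ℂ) =
      (∑ P ∈ Finset.univ.filter (fun P : E → AddChar F ℂ => IsFlowAux o E P),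
        gtermAux A E P) / (Fintype.card F : ℂ) ^ E.card := by
  set f : ℂ := (Fintype.card F : ℂ) with hfdef
  have hf : f ≠ 0 := Nat.cast_ne_zero.mpr Fintype.card_ne_zero
  set v := Fintype.card V with hv
  -- Step 1
  have hGam : (Gamma V F A E : ℂ)
      = (∑ X : V → F, ∏ t : E,
          if X (o t.1).1 - X (o t.1).2 ∈ A then (1:ℂ) else 0) / f ^ v := by
    have hnum : ((Nat.card {X : V → F //
        ∀ e ∈ E, ∀ u w : V, e = s(u, w) → X u - X w ∈ A}) : ℂ)
        = ∑ X : V → F, ∏ t : E,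
            if X (o t.1).1 - X (o t.1).2 ∈ A then (1:ℂ) else 0 := by
      rw [Nat.card_eq_fintype_card, Fintype.card_subtype, ← Finset.sum_boole]
      refine Finset.sum_congr rfl fun X _ => ?_
      rw [Finset.prod_boole]
      by_cases h : ∀ e ∈ E, ∀ u w : V, e = s(u, w) → X u - X w ∈ A
      · rw [if_pos h, if_pos (fun t _ => ((cond_iff A hA E o ho X).mp h) t)]
      · rw [if_neg h, if_neg (fun hh => h ((cond_iff A hA E o ho X).mpr (fun t => hh t (Finset.mem_univ t))))]
    rw [Gamma]
    push_cast
    rw [hnum]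
  rw [hGam]
  -- Step 2: expand indicators
  have hexp : ∀ X : V → F,
      (∏ t : E, if X (o t.1).1 - X (o t.1).2 ∈ A then (1:ℂ) else 0)
        = (∑ P : E → AddChar F ℂ,
            gtermAux A E P * ∏ t : E, P t (X (o t.1).1 - X (o t.1).2)) / f ^ E.card := by
    intro X
    have h1 : ∀ t : E, (if X (o t.1).1 - X (o t.1).2 ∈ A then (1:ℂ) else 0)
        = (∑ ψ : AddChar F ℂ, (∑ a ∈ A, ψ a) * ψ (X (o t.1).1 - X (o t.1).2)) / f := by
      intro t
      rw [indicator_eq' A hA, mul_div_assoc, div_self hf, mul_one]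
    rw [Finset.prod_congr rfl fun t _ => h1 t, Finset.prod_div_distrib, Finset.prod_const,
      Finset.card_univ, Fintype.card_coe]
    congr 1
    rw [Finset.prod_univ_sum (fun _ : E => (Finset.univ : Finset (AddChar F ℂ)))
      (fun (t : E) (ψ : AddChar F ℂ) => (∑ a ∈ A, ψ a) * ψ (X (o t.1).1 - X (o t.1).2)),
      Fintype.piFinset_univ]
    refine Finset.sum_congr rfl fun P _ => ?_
    rw [Finset.prod_mul_distrib]
    rfl
  rw [Finset.sum_congr rfl fun X _ => hexp X]
  -- Step 3
  rw [← Finset.sum_div, Finset.sum_comm]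
  have h3 : ∀ P : E → AddChar F ℂ,
      ∑ X : V → F, gtermAux A E P * ∏ t : E, P t (X (o t.1).1 - X (o t.1).2)
        = (if IsFlowAux o E P then gtermAux A E P else 0) * f ^ v := by
    intro P
    rw [← Finset.mul_sum, sum_flow E o P]
    simp only [IsFlowAux]
    by_cases h : ∀ X : V → F, ∏ t : E, P t (X (o t.1).1 - X (o t.1).2) = 1
    · rw [if_pos h]
      exact (congrArg (· * f ^ v) (if_pos (show IsFlowAux o E P from h) :
        (if IsFlowAux o E P then gtermAux A E P else 0) = _)).symm
    · rw [if_neg h, mul_zero]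
      exact ((congrArg (· * f ^ v) (if_neg (show ¬ IsFlowAux o E P from h) :
        (if IsFlowAux o E P then gtermAux A E P else 0) = _)).trans (zero_mul _)).symm
  rw [Finset.sum_congr rfl fun P _ => h3 P, ← Finset.sum_mul, ← Finset.sum_filter]
  rw [div_div, mul_comm (f ^ E.card) (f ^ v), ← div_div, mul_div_assoc, div_self (pow_ne_zero _ hf), mul_one]


set_option maxHeartbeats 2000000 in
lemma gammaPlus_eq (o : Sym2 V → V × V) (A : Finset F) (H : Finset (Sym2 V)) :
    GammaPlus V F o A H =
      (∑ P ∈ Finset.univ.filter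
          (fun P : H → AddChar F ℂ => IsFlowAux o H P ∧ ∀ t : H, P t ≠ 1),
        gtermAux A H P) / (Fintype.card F : ℂ) ^ H.card := by
  rw [GammaPlus]
  congr 1
  refine Finset.sum_congr ?_ fun P _ => ?_
  · refine Finset.filter_congr fun P _ => ?_
    constructor
    · rintro ⟨h1, h2⟩
      exact ⟨h1, fun t => AddChar.ne_one_iff.mpr (h2 t)⟩
    · rintro ⟨h1, h2⟩
      exact ⟨h1, fun t => AddChar.ne_one_iff.mp (h2 t)⟩
  · unfold gtermAux
    convert qsum A (fun t a => P t a) using 2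
    congr!

lemma flows_empty (o : Sym2 V → V × V) (ho : ∀ e : Sym2 V, Sym2.mk.uncurry (o e) = e)
    {H : Finset (Sym2 V)} (hnd : ∀ e ∈ H, ¬ e.IsDiag) (hni : ¬ IsthmusFree V H) :
    (Finset.univ.filter
      (fun P : H → AddChar F ℂ => IsFlowAux o H P ∧ ∀ t : H, P t ≠ 1)) = ∅ := by
  rw [IsthmusFree] at hni
  push_neg at hni
  obtain ⟨t, ht, hc⟩ := hni
  rw [Finset.filter_eq_empty_iff]
  rintro P - ⟨hflow, hnt⟩
  exact hnt ⟨t, ht⟩ (flow_trivial_of_isthmus o ho H hnd t ht hc P hflow)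

end AuxLemmas

/-- Lemma 2: `[Γ^A]_E = Σ_{H ⊆ E isthmus-free} α^{|E|-|H|} [Γ^A_+]_H`. -/
theorem gamma_eq_sum_isthmusFree_gammaPlus
    (V : Type) [Fintype V] (F : Type) [Fintype F] [AddCommGroup F]
    (A : Finset F) (hA : ∀ a ∈ A, -a ∈ A)
    (E : Finset (Sym2 V)) (hE : ∀ e ∈ E, ¬ e.IsDiag)
    (o : Sym2 V → V × V) (ho : ∀ e : Sym2 V, Sym2.mk.uncurry (o e) = e) :
    (Gamma V F A E : ℂ) =
      ∑ H ∈ E.powerset.filter (IsthmusFree V),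
        ((A.card : ℂ) / (Fintype.card F : ℂ)) ^ (E.card - H.card) *
          GammaPlus V F o A H := by
  classical
  have hf : (Fintype.card F : ℂ) ≠ 0 := Nat.cast_ne_zero.mpr Fintype.card_ne_zero
  rw [gamma_eq A hA E o ho]
  have hmaps : ∀ P ∈ Finset.univ.filter (fun P : E → AddChar F ℂ => IsFlowAux o E P),
      suppAux E P ∈ E.powerset :=
    fun P _ => Finset.mem_powerset.mpr (suppAux_subset P)
  rw [← Finset.sum_fiberwise_of_maps_to hmaps (gtermAux A E), Finset.sum_div]
  rw [Finset.sum_filter_of_ne (s := E.powerset)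
    (f := fun H => ((A.card : ℂ) / (Fintype.card F : ℂ)) ^ (E.card - H.card) *
      GammaPlus V F o A H) ?_]
  · refine Finset.sum_congr rfl fun H hH => ?_
    have hHE : H ⊆ E := Finset.mem_powerset.mp hH
    rw [fiber_eq o A hHE, gammaPlus_eq o A H, div_pow, div_mul_div_comm, ← pow_add,
      Nat.sub_add_cancel (Finset.card_le_card hHE), mul_div_assoc]
  · intro H hH hne
    by_contra hni
    apply hne
    beta_reduce
    rw [gammaPlus_eq o A H,
      flows_empty o ho (fun e he => hE e (Finset.mem_powerset.mp hH he)) hni]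
    simp
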